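/- EFX allocations always exist for instances with two agents: for any finite set M of goods and any two additive valuations v_1, v_2, there exists a partition (A_1, A_2) of M such that for each i, j ∈ {1,2} and every good g ∈ A_j, v_i(A_i) ≥ v_i(A_j \ {g}). -/

import Mathlib

open Finset

set_option maxHeartbeats 1000000 in
/-- EFX allocations always exist for instances with two agents and additive
valuations. -/
theorem efx_exists_two_agents {G : Type*} [DecidableEq G] (M : Finset G)
    (v : Fin 2 → G → ℝ) (hv : ∀ i g, 0 ≤ v i g) :
    ∃ A : Fin 2 → Finset G,
      (∀ i j, i ≠ j → Disjoint (A i) (A j)) ∧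
      Finset.univ.biUnion A = M ∧
      ∀ i j : Fin 2, ∀ g ∈ A j, ∑ x ∈ (A j).erase g, v i x ≤ ∑ x ∈ A i, v i x := by
  classical
  set w : Finset G → ℝ := fun S => ∑ x ∈ S, v 0 x with hwdef
  have hwnn : ∀ S : Finset G, 0 ≤ w S := fun S => Finset.sum_nonneg (fun x _ => hv 0 x)
  have hmono : ∀ {S T : Finset G}, S ⊆ T → w S ≤ w T :=
    fun h => Finset.sum_le_sum_of_subset_of_nonneg h (fun x _ _ => hv 0 x)
  set C := M.powerset.filter (fun A => w (M \ A) ≤ w A) with hCdef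
  have hMC : M ∈ C := by
    simp only [hCdef, Finset.mem_filter, Finset.mem_powerset]
    refine ⟨subset_rfl, ?_⟩
    simp only [Finset.sdiff_self]
    have : w ∅ = 0 := by simp [hwdef]
    rw [this]; exact hwnn M
  obtain ⟨A₀, hA₀C, hA₀min⟩ := C.exists_min_image w ⟨M, hMC⟩
  set C' := C.filter (fun A => w A ≤ w A₀) with hC'def
  have hA₀C' : A₀ ∈ C' := by
    simp only [hC'def, Finset.mem_filter]; exact ⟨hA₀C, le_refl _⟩
  obtain ⟨A, hAC', hAmin⟩ := C'.exists_min_image (fun S => S.card) ⟨A₀, hA₀C'⟩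
  have hAC : A ∈ C := (Finset.mem_filter.1 hAC').1
  have hAle : w A ≤ w A₀ := (Finset.mem_filter.1 hAC').2
  have hAsub : A ⊆ M := Finset.mem_powerset.1 (Finset.mem_filter.1 hAC).1
  have hge : w (M \ A) ≤ w A := (Finset.mem_filter.1 hAC).2
  have hAeq : w A = w A₀ := le_antisymm hAle (hA₀min A hAC)
  -- key EFX property of the cut, with respect to w = v 0
  have hP1 : ∀ g ∈ A, w (A.erase g) ≤ w (M \ A) := by
    intro g hg
    by_contra hcon
    push_neg at hcon
    set A' := A.erase g with hA'def
    have hA'sub : A' ⊆ M := (Finset.erase_subset _ _).trans hAsub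
    have hgM : g ∈ M := hAsub hg
    have hgnot : g ∉ M \ A := by simp [hg]
    have hcompl : M \ A' = insert g (M \ A) := by
      ext x
      simp only [hA'def, Finset.mem_sdiff, Finset.mem_erase, Finset.mem_insert]
      constructor
      · rintro ⟨hxM, hx⟩
        by_cases hxg : x = g
        · exact Or.inl hxg
        · exact Or.inr ⟨hxM, fun hxA => hx ⟨hxg, hxA⟩⟩
      · rintro (rfl | ⟨hxM, hxA⟩)
        · exact ⟨hgM, fun h => h.1 rfl⟩
        · exact ⟨hxM, fun h => hxA h.2⟩
    have hwA' : w A' + v 0 g = w A := by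
      simpa [hwdef, hA'def] using Finset.sum_erase_add A (v 0) hg
    have hwcompl : w (M \ A') = v 0 g + w (M \ A) := by
      rw [hcompl]
      simp [hwdef, Finset.sum_insert hgnot]
    by_cases hcase : w (M \ A') ≤ w A'
    · have hA'C : A' ∈ C := by
        simp only [hCdef, Finset.mem_filter, Finset.mem_powerset]
        exact ⟨hA'sub, hcase⟩
      by_cases hgpos : v 0 g = 0
      · have hwA'eq : w A' = w A := by linarith
        have hA'C' : A' ∈ C' := by
          simp only [hC'def, Finset.mem_filter]
          exact ⟨hA'C, by rw [hwA'eq]; exact hAle⟩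
        have := hAmin A' hA'C'
        have hcard : A'.card < A.card := Finset.card_erase_lt_of_mem hg
        omega
      · have hgpos' : 0 < v 0 g := lt_of_le_of_ne (hv 0 g) (Ne.symm hgpos)
        have := hA₀min A' hA'C
        linarith [hAeq]
    · push_neg at hcase
      set B' := M \ A' with hB'def
      have hB'C : B' ∈ C := by
        simp only [hCdef, Finset.mem_filter, Finset.mem_powerset]
        refine ⟨Finset.sdiff_subset, ?_⟩
        have : M \ B' = A' := Finset.sdiff_sdiff_eq_self hA'sub
        rw [this]
        exact le_of_lt hcase
      have := hA₀min B' hB'C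
      have hwB' : w B' = v 0 g + w (M \ A) := hwcompl
      -- w B' = v0 g + w(M\A) < v0 g + w A' = w A = w A₀ : contradiction
      have h1 : w (M \ A) < w A' := hcon
      linarith [hAeq, hwA']
  have hQ1 : ∀ g ∈ M \ A, w ((M \ A).erase g) ≤ w A := by
    intro g hg
    exact le_trans (hmono (Finset.erase_subset _ _)) hge
  -- agent 1 picks its preferred bundle
  set w2 : Finset G → ℝ := fun S => ∑ x ∈ S, v 1 x with hw2def
  by_cases h2 : w2 (M \ A) ≤ w2 A
  · refine ⟨![M \ A, A], ?_, ?_, ?_⟩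
    · intro i j hij
      fin_cases i <;> fin_cases j <;> simp_all <;>
        [exact Finset.sdiff_disjoint; exact Finset.disjoint_sdiff]
    · have : Finset.univ.biUnion ![M \ A, A] = (M \ A) ∪ A := by
        ext x
        have := @hAsub x
        simp only [Finset.mem_biUnion, Finset.mem_univ, true_and, Fin.exists_fin_two,
          Matrix.cons_val_zero, Matrix.cons_val_one, Matrix.head_cons, Finset.mem_union,
          Finset.mem_sdiff]
      rw [this, Finset.sdiff_union_of_subset hAsub]
    · intro i j g hg
      fin_cases i <;> fin_cases j
      · exact le_trans (Finset.sum_le_sum_of_subset_of_nonneg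
          (Finset.erase_subset _ _) (fun x _ _ => hv 0 x)) (le_refl _)
      · -- agent 0 owns M \ A, looks at A minus g : w (A.erase g) ≤ w (M\A)
        exact hP1 g (by simpa using hg)
      · -- agent 1 owns A, looks at (M\A) minus g
        have h3 : w2 ((M \ A).erase g) ≤ w2 (M \ A) :=
          Finset.sum_le_sum_of_subset_of_nonneg (Finset.erase_subset _ _)
            (fun x _ _ => hv 1 x)
        calc ∑ x ∈ ((M \ A)).erase g, v 1 x ≤ w2 (M \ A) := h3
          _ ≤ w2 A := h2
      · exact Finset.sum_le_sum_of_subset_of_nonneg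
          (Finset.erase_subset _ _) (fun x _ _ => hv 1 x)
  · push_neg at h2
    refine ⟨![A, M \ A], ?_, ?_, ?_⟩
    · intro i j hij
      fin_cases i <;> fin_cases j <;> simp_all <;>
        [exact Finset.disjoint_sdiff; exact Finset.sdiff_disjoint]
    · have : Finset.univ.biUnion ![A, M \ A] = A ∪ (M \ A) := by
        ext x
        have := @hAsub x
        simp only [Finset.mem_biUnion, Finset.mem_univ, true_and, Fin.exists_fin_two,
          Matrix.cons_val_zero, Matrix.cons_val_one, Matrix.head_cons, Finset.mem_union,
          Finset.mem_sdiff]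
      rw [this, Finset.union_sdiff_of_subset hAsub]
    · intro i j g hg
      fin_cases i <;> fin_cases j
      · exact Finset.sum_le_sum_of_subset_of_nonneg
          (Finset.erase_subset _ _) (fun x _ _ => hv 0 x)
      · -- agent 0 owns A, looks at (M\A) minus g
        exact hQ1 g (by simpa using hg)
      · -- agent 1 owns M\A, looks at A minus g
        have h3 : w2 (A.erase g) ≤ w2 A :=
          Finset.sum_le_sum_of_subset_of_nonneg (Finset.erase_subset _ _)
            (fun x _ _ => hv 1 x)
        calc ∑ x ∈ A.erase g, v 1 x ≤ w2 A := h3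
          _ ≤ w2 (M \ A) := le_of_lt h2
      · exact Finset.sum_le_sum_of_subset_of_nonneg
          (Finset.erase_subset _ _) (fun x _ _ => hv 1 x)
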